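/- Fix a constant q > 0 and let B_SE[U] = {M | SE[U](M) ≤ q}, restricted to programs without low-security inputs. Then B_SE[U] is not a k-safety property for any k > 0; that is, for every k > 0 there exists a program M with SE[U](M) > q such that for every trace set T ⊆ ⟦M⟧ with |T| ≤ k there exists a program M' with T ⊆ ⟦M'⟧ and SE[U](M') ≤ q. -/

import Mathlib

/-!
Statement 19: Fix `q > 0` and let `B_SE[U] = {M | SE[U](M) ≤ q}`, restricted to
programs without low-security inputs.  Then `B_SE[U]` is not a `k`-safety
property for any `k > 0`: for every `k > 0` there is a program `M` with
`SE[U](M) > q` such that for every trace set `T ⊆ ⟦M⟧` with `|T| ≤ k` there is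
a program `M'` with `T ⊆ ⟦M'⟧` and `SE[U](M') ≤ q`.
-/

/-- A deterministic program without low-security inputs: a finite nonempty
high-security input set `Hs` and behavior `f` (inputs and outputs drawn from
the fixed countable universe `ℕ`). -/
structure ProgNL where
  Hs : Finset ℕ
  hH : Hs.Nonempty
  f : ℕ → ℕ

/-- The set of traces `⟦M⟧ = {(h,o) | h ∈ ℍ, o = M(h)}`. -/
def ProgNL.traces (M : ProgNL) : Set (ℕ × ℕ) :=
  {t | t.1 ∈ M.Hs ∧ t.2 = M.f t.1}

/-- The uniform distribution on the input set of `M`. -/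
noncomputable def ProgNL.U (M : ProgNL) : ℕ → ℝ :=
  fun h => if h ∈ M.Hs then (M.Hs.card : ℝ)⁻¹ else 0

/-- `p · log₂(1/p)`, one summand of the Shannon entropy. -/
noncomputable def entTerm (p : ℝ) : ℝ := p * Real.logb 2 (1 / p)

/-- Probability `U(O = o)` where `O = M(H)`. -/
noncomputable def ProgNL.pO (M : ProgNL) (o : ℕ) : ℝ :=
  ∑ h ∈ M.Hs, if M.f h = o then M.U h else 0

/-- Shannon entropy `𝓗[U](H)`. -/
noncomputable def ProgNL.entH (M : ProgNL) : ℝ :=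
  ∑ h ∈ M.Hs, entTerm (M.U h)

/-- Conditional Shannon entropy `𝓗[U](H|O)` where `O = M(H)`. -/
noncomputable def ProgNL.entHO (M : ProgNL) : ℝ :=
  ∑ o ∈ M.Hs.image M.f,
    M.pO o * ∑ h ∈ M.Hs, entTerm ((if M.f h = o then M.U h else 0) / M.pO o)

/-- Shannon-entropy-based QIF under the uniform distribution:
`SE[U](M) = 𝓗[U](H) − 𝓗[U](H|O)`. -/
noncomputable def ProgNL.SEU (M : ProgNL) : ℝ :=
  M.entH - M.entHO


-- basic entTerm lemmas
lemma entTerm_zero : entTerm 0 = 0 := by simp [entTerm]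

lemma entTerm_one : entTerm 1 = 0 := by simp [entTerm]

lemma entTerm_inv (c : ℝ) : entTerm c⁻¹ = c⁻¹ * Real.logb 2 c := by
  simp [entTerm, one_div]

-- entropy of H under uniform
lemma entH_eq (M : ProgNL) : M.entH = Real.logb 2 M.Hs.card := by
  have hc : (0:ℝ) < M.Hs.card := by exact_mod_cast M.hH.card_pos
  have : M.entH = ∑ h ∈ M.Hs, entTerm ((M.Hs.card : ℝ)⁻¹) := by
    apply Finset.sum_congr rfl
    intro h hh
    simp [ProgNL.U, hh]
  rw [this, Finset.sum_const, entTerm_inv]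
  field_simp
  rw [nsmul_eq_mul]
  field_simp

lemma pO_eq_of_mem (M : ProgNL) (hinj : Set.InjOn M.f M.Hs) {h : ℕ} (hh : h ∈ M.Hs) :
    M.pO (M.f h) = M.U h := by
  unfold ProgNL.pO
  rw [Finset.sum_eq_single_of_mem h hh]
  · simp
  · intro h' hh' hne
    rw [if_neg]
    intro heq
    exact hne (hinj hh' hh heq)

lemma entHO_eq_zero (M : ProgNL) (hinj : Set.InjOn M.f M.Hs) : M.entHO = 0 := by
  unfold ProgNL.entHO
  apply Finset.sum_eq_zero
  intro o ho
  obtain ⟨h0, hh0, rfl⟩ := Finset.mem_image.mp ho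
  have hpO : M.pO (M.f h0) = M.U h0 := pO_eq_of_mem M hinj hh0
  have hU : M.U h0 = (M.Hs.card : ℝ)⁻¹ := by simp [ProgNL.U, hh0]
  have hU0 : M.U h0 ≠ 0 := by
    rw [hU]
    have : (0:ℝ) < M.Hs.card := by exact_mod_cast M.hH.card_pos
    positivity
  have : ∑ h ∈ M.Hs, entTerm ((if M.f h = M.f h0 then M.U h else 0) / M.pO (M.f h0)) = 0 := by
    apply Finset.sum_eq_zero
    intro h hh
    by_cases he : M.f h = M.f h0
    · have : h = h0 := hinj hh hh0 he
      subst this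
      rw [if_pos he, hpO, div_self hU0, entTerm_one]
    · rw [if_neg he, zero_div, entTerm_zero]
  rw [this, mul_zero]

lemma SEU_inj (M : ProgNL) (hinj : Set.InjOn M.f M.Hs) :
    M.SEU = Real.logb 2 M.Hs.card := by
  rw [ProgNL.SEU, entH_eq, entHO_eq_zero M hinj, sub_zero]

section ConstShape
variable (N : ℕ) (S : Finset ℕ)

noncomputable def Mconst (hk : S.card < N) : ProgNL :=
  ⟨Finset.range N, Finset.nonempty_range_iff.mpr (by omega),
    fun h => if h ∈ S then h else N⟩

lemma Mconst_SEU (hS : ∀ s ∈ S, s < N) (hk : S.card < N) :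
    (Mconst N S hk).SEU
      = Real.logb 2 N - (((N:ℝ) - S.card) / N) * Real.logb 2 ((N:ℝ) - S.card) := by
  set M := Mconst N S hk with hM
  have hHs : M.Hs = Finset.range N := rfl
  have hf : M.f = fun h => if h ∈ S then h else N := rfl
  have hNpos : 0 < N := by omega
  have hcard : M.Hs.card = N := by rw [hHs, Finset.card_range]
  have hSsub : S ⊆ Finset.range N := fun s hs => Finset.mem_range.mpr (hS s hs)
  have hNnotS : N ∉ S := fun h => lt_irrefl N (hS N h)
  have hsd : (Finset.range N \ S).card = N - S.card := by
    rw [Finset.card_sdiff_of_subset hSsub, Finset.card_range]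
  have hNR : (0:ℝ) < N := by exact_mod_cast hNpos
  have hNsR : (0:ℝ) < (N:ℝ) - S.card := by
    have : (S.card:ℝ) < N := by exact_mod_cast hk
    linarith
  have hUval : ∀ h ∈ M.Hs, M.U h = (N:ℝ)⁻¹ := by
    intro h hh
    simp [ProgNL.U, hh, hcard]
  have hfS : ∀ o ∈ S, ∀ h ∈ Finset.range N, (M.f h = o ↔ h = o) := by
    intro o hoS h hh
    rw [hf]
    by_cases hhS : h ∈ S
    · simp only [if_pos hhS]
    · simp only [if_neg hhS]
      constructor
      · intro he; exact absurd (he ▸ hoS) hNnotS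
      · intro he; exact absurd (he ▸ hoS) hhS
  have hfN : ∀ h ∈ Finset.range N, (M.f h = N ↔ h ∉ S) := by
    intro h hh
    have hlt : h < N := Finset.mem_range.mp hh
    rw [hf]
    by_cases hhS : h ∈ S
    · simp only [if_pos hhS]
      constructor
      · intro he; omega
      · intro he; exact absurd hhS he
    · simp [hhS]
  have hNimg : ∃ h ∈ Finset.range N, M.f h = N := by
    have hne : (Finset.range N \ S).Nonempty := by
      rw [← Finset.card_pos, hsd]; omega
    obtain ⟨h, hh⟩ := hne
    rw [Finset.mem_sdiff] at hh
    exact ⟨h, hh.1, (hfN h hh.1).mpr hh.2⟩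
  have himg : M.Hs.image M.f = insert N S := by
    ext o
    simp only [Finset.mem_image, Finset.mem_insert, hHs]
    constructor
    · rintro ⟨h, hh, rfl⟩
      rw [hf]
      by_cases hhS : h ∈ S
      · right; simpa [hhS]
      · left; simp [hhS]
    · intro ho
      rcases ho with ho | hoS
      · rw [ho]; exact hNimg
      · exact ⟨o, hSsub hoS, (hfS o hoS o (hSsub hoS)).mpr rfl⟩
  have hpON : M.pO N = ((N:ℝ) - S.card) / N := by
    unfold ProgNL.pO
    rw [show (∑ h ∈ M.Hs, if M.f h = N then M.U h else 0)
        = ∑ h ∈ Finset.range N, if h ∉ S then (N:ℝ)⁻¹ else 0 by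
      apply Finset.sum_congr hHs
      intro h hh
      rw [hUval h (hHs ▸ hh)]
      simp only [hfN h hh]]
    rw [← Finset.sum_filter, ← Finset.sdiff_eq_filter, Finset.sum_const, hsd,
      nsmul_eq_mul]
    rw [Nat.cast_sub hk.le]
    field_simp
  have hpOS : ∀ o ∈ S, M.pO o = (N:ℝ)⁻¹ := by
    intro o hoS
    unfold ProgNL.pO
    rw [Finset.sum_eq_single_of_mem o (hHs ▸ hSsub hoS)]
    · rw [if_pos ((hfS o hoS o (hSsub hoS)).mpr rfl), hUval o (hHs ▸ hSsub hoS)]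
    · intro h hh hne
      rw [if_neg]
      intro heq
      exact hne ((hfS o hoS h (hHs ▸ hh)).mp heq)
  have hinnerS : ∀ o ∈ S,
      (∑ h ∈ M.Hs, entTerm ((if M.f h = o then M.U h else 0) / M.pO o)) = 0 := by
    intro o hoS
    apply Finset.sum_eq_zero
    intro h hh
    by_cases he : M.f h = o
    · have hho : h = o := (hfS o hoS h (hHs ▸ hh)).mp he
      subst hho
      rw [if_pos he, hUval h hh, hpOS h hoS, div_self (by positivity), entTerm_one]
    · rw [if_neg he, zero_div, entTerm_zero]
  have hinnerN :
      (∑ h ∈ M.Hs, entTerm ((if M.f h = N then M.U h else 0) / M.pO N))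
        = Real.logb 2 ((N:ℝ) - S.card) := by
    rw [show (∑ h ∈ M.Hs, entTerm ((if M.f h = N then M.U h else 0) / M.pO N))
        = ∑ h ∈ Finset.range N,
            if h ∉ S then entTerm (((N:ℝ) - S.card)⁻¹) else 0 by
      apply Finset.sum_congr hHs
      intro h hh
      rw [hUval h (hHs ▸ hh), hpON]
      simp only [hfN h hh]
      by_cases hhS : h ∈ S
      · simp [hhS, entTerm_zero]
      · rw [if_pos hhS, if_pos hhS]
        congr 1
        field_simp]
    rw [← Finset.sum_filter, ← Finset.sdiff_eq_filter, Finset.sum_const, hsd,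
      nsmul_eq_mul, entTerm_inv, Nat.cast_sub hk.le]
    rw [← mul_assoc, mul_inv_cancel₀ (by push_cast at hNsR ⊢; linarith), one_mul]
  have hentHO : M.entHO = (((N:ℝ) - S.card) / N) * Real.logb 2 ((N:ℝ) - S.card) := by
    unfold ProgNL.entHO
    rw [himg, Finset.sum_insert hNnotS, hinnerN, hpON]
    rw [Finset.sum_eq_zero fun o ho => by rw [hinnerS o ho, mul_zero]]
    ring
  rw [ProgNL.SEU, entH_eq, hcard, hentHO]

end ConstShape

-- the asymptotic bound
noncomputable def boundFn (k : ℕ) (x : ℝ) : ℝ :=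
  ((k:ℝ)/x) * Real.logb 2 x + (Real.logb 2 x - Real.logb 2 (x - k))

lemma SE_le_bound (N s k : ℕ) (hsk : s ≤ k) (hkN : k < N) :
    Real.logb 2 N - (((N:ℝ) - s)/N) * Real.logb 2 ((N:ℝ) - s) ≤ boundFn k N := by
  have hN0 : (0:ℝ) < N := by exact_mod_cast Nat.lt_of_le_of_lt (Nat.zero_le _) hkN
  have hsR : (s:ℝ) ≤ k := by exact_mod_cast hsk
  have hkR : (k:ℝ) < N := by exact_mod_cast hkN
  have hNk : (0:ℝ) < (N:ℝ) - k := by linarith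
  have hNs : (0:ℝ) < (N:ℝ) - s := by linarith
  have hs0 : (0:ℝ) ≤ s := Nat.cast_nonneg s
  set L := Real.logb 2 (N:ℝ) with hL
  set Ls := Real.logb 2 ((N:ℝ) - s) with hLs
  set Lk := Real.logb 2 ((N:ℝ) - k) with hLk
  have hLnn : 0 ≤ L := Real.logb_nonneg one_lt_two (by exact_mod_cast Nat.one_le_iff_ne_zero.mpr (by omega))
  have h1 : Lk ≤ Ls := Real.logb_le_logb_of_le one_lt_two hNk (by linarith)
  have h2 : Ls ≤ L := Real.logb_le_logb_of_le one_lt_two hNs (by linarith)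
  have hLknn : 0 ≤ Lk ∨ True := Or.inr trivial
  rw [boundFn, ← sub_nonneg]
  have key : 0 ≤ ((k:ℝ) - s) * L + ((N:ℝ) - s) * (Ls - Lk) + (s:ℝ) * (L - Lk) := by
    have a1 : 0 ≤ ((k:ℝ) - s) * L := mul_nonneg (by linarith) hLnn
    have a2 : 0 ≤ ((N:ℝ) - s) * (Ls - Lk) := mul_nonneg (by linarith) (by linarith)
    have a3 : 0 ≤ (s:ℝ) * (L - Lk) := mul_nonneg hs0 (by linarith)
    linarith
  have hexp : (k:ℝ)/N * L + (L - Lk) - (L - (((N:ℝ) - s)/N) * Ls)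
      = (((k:ℝ) - s) * L + ((N:ℝ) - s) * (Ls - Lk) + (s:ℝ) * (L - Lk)) / N := by
    field_simp
    ring
  rw [hexp]
  positivity

lemma tendsto_boundFn (k : ℕ) :
    Filter.Tendsto (boundFn k) Filter.atTop (nhds 0) := by
  have h1 : Filter.Tendsto (fun x : ℝ => ((k:ℝ)/x) * Real.logb 2 x)
      Filter.atTop (nhds 0) := by
    have hlog : Filter.Tendsto (fun x : ℝ => Real.log x / x) Filter.atTop (nhds 0) := by
      simpa using Real.tendsto_pow_log_div_mul_add_atTop 1 0 1 one_ne_zero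
    have := hlog.const_mul ((k:ℝ) / Real.log 2)
    rw [mul_zero] at this
    apply this.congr' ?_
    filter_upwards [Filter.eventually_gt_atTop (0:ℝ)] with x hx
    rw [Real.logb]
    ring
  have h2 : Filter.Tendsto (fun x : ℝ => Real.logb 2 x - Real.logb 2 (x - k))
      Filter.atTop (nhds 0) := by
    have hq : Filter.Tendsto (fun x : ℝ => x / (x - k)) Filter.atTop (nhds 1) := by
      have hsub : Filter.Tendsto (fun x : ℝ => x - (k:ℝ)) Filter.atTop Filter.atTop :=
        Filter.tendsto_atTop_add_const_right _ _ Filter.tendsto_id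
      have hk0 : Filter.Tendsto (fun x : ℝ => (k:ℝ) / (x - k)) Filter.atTop (nhds 0) :=
        Filter.Tendsto.div_atTop tendsto_const_nhds hsub
      have := hk0.const_add (1:ℝ)
      rw [add_zero] at this
      apply this.congr' ?_
      filter_upwards [Filter.eventually_gt_atTop ((k:ℝ))] with x hx
      have : x - (k:ℝ) ≠ 0 := by linarith
      field_simp
      ring
    have hcont : ContinuousAt (Real.logb 2) 1 :=
      (Real.continuousAt_log one_ne_zero).div_const _
    have := (hcont.tendsto.comp hq)
    rw [Real.logb_one] at this
    apply this.congr' ?_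
    filter_upwards [Filter.eventually_gt_atTop ((k:ℝ)), Filter.eventually_gt_atTop (0:ℝ)]
      with x hx hx0
    have hxk : x - (k:ℝ) ≠ 0 := by linarith
    simp only [Function.comp]
    rw [Real.logb_div (by linarith) hxk]
  have := h1.add h2
  rw [add_zero] at this
  exact this

/-- For any constant `q > 0`, `B_SE[U] = {M | SE[U](M) ≤ q}` is not a
`k`-safety property for any `k > 0`: every potential counterexample trace set
of size at most `k` extends to a program whose flow is at most `q`. -/
theorem B_SE_not_ksafety (q : ℝ) (hq : 0 < q) :
    ∀ k : ℕ, 0 < k →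
      ∃ M : ProgNL, q < M.SEU ∧
        ∀ T ⊆ M.traces, T.ncard ≤ k →
          ∃ M' : ProgNL, T ⊆ M'.traces ∧ M'.SEU ≤ q := by
  intro k hk
  set m : ℕ := ⌊q⌋₊ + 1 with hm
  set n : ℕ := 2 ^ m with hn
  have hnpos : 0 < n := Nat.pow_pos (by norm_num : 0 < 2)
  refine ⟨⟨Finset.range n, Finset.nonempty_range_iff.mpr hnpos.ne', id⟩, ?_, ?_⟩
  · rw [SEU_inj _ (fun a _ b _ h => h)]
    simp only [Finset.card_range]
    have : Real.logb 2 ((n:ℝ)) = m := by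
      rw [hn]
      push_cast
      rw [Real.logb_pow, Real.logb_self_eq_one one_lt_two]
      push_cast
      ring
    rw [this]
    calc q < ⌊q⌋₊ + 1 := Nat.lt_floor_add_one q
    _ = (m:ℝ) := by push_cast [hm]; ring
  · intro T hT hTk
    set M : ProgNL := ⟨Finset.range n, Finset.nonempty_range_iff.mpr hnpos.ne', id⟩
    have htrfin : M.traces.Finite := by
      apply Set.Finite.subset (Finset.finite_toSet ((Finset.range n) ×ˢ (Finset.range n)))
      rintro ⟨h, o⟩ ⟨h1, h2⟩
      have h2' : o = h := h2
      simp only [Finset.coe_product, Set.mem_prod, Finset.mem_coe]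
      exact ⟨h1, h2' ▸ h1⟩
    have hTfin : T.Finite := htrfin.subset hT
    set S : Finset ℕ := hTfin.toFinset.image Prod.fst with hS
    have hScard : S.card ≤ k := by
      calc S.card ≤ hTfin.toFinset.card := Finset.card_image_le
      _ = T.ncard := (Set.ncard_eq_toFinset_card T hTfin).symm
      _ ≤ k := hTk
    have hSn : ∀ s ∈ S, s < n := by
      intro s hs
      rw [hS, Finset.mem_image] at hs
      obtain ⟨t, ht, rfl⟩ := hs
      rw [Set.Finite.mem_toFinset] at ht
      exact Finset.mem_range.mp (hT ht).1
    -- choose N large enough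
    have hev : ∀ᶠ N : ℕ in Filter.atTop, boundFn k N < q := by
      have := (tendsto_boundFn k).comp tendsto_natCast_atTop_atTop
      exact this.eventually_lt_const hq
    obtain ⟨N, hN1, hN2⟩ := (hev.and (Filter.eventually_ge_atTop (max n (k+1)))).exists
    have hnN : n ≤ N := le_trans (le_max_left _ _) hN2
    have hkN : k < N := lt_of_lt_of_le (Nat.lt_succ_self k) (le_trans (le_max_right _ _) hN2)
    have hSN : ∀ s ∈ S, s < N := fun s hs => lt_of_lt_of_le (hSn s hs) hnN
    have hScardN : S.card < N := lt_of_le_of_lt hScard hkN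
    refine ⟨Mconst N S hScardN, ?_, ?_⟩
    · rintro ⟨h, o⟩ ht
      have hmem : (h, o) ∈ M.traces := hT ht
      obtain ⟨hh, ho⟩ := hmem
      simp only [id] at ho
      have hhS : h ∈ S := by
        rw [hS, Finset.mem_image]
        exact ⟨(h, o), (Set.Finite.mem_toFinset hTfin).mpr ht, rfl⟩
      constructor
      · exact Finset.mem_range.mpr (lt_of_lt_of_le (Finset.mem_range.mp hh) hnN)
      · show o = if h ∈ S then h else N
        rw [if_pos hhS, ho]
        rfl
    · rw [Mconst_SEU N S hSN hScardN]
      calc Real.logb 2 N - (((N:ℝ) - S.card)/N) * Real.logb 2 ((N:ℝ) - S.card)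
          ≤ boundFn k N := SE_le_bound N S.card k hScard hkN
      _ ≤ q := hN1.le
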